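/- Let A be a Banach lattice algebra with identity e and let p ∈ A with p ≥ 0. Then p is a left band projection (for every x ≥ 0 one has px ≤ x and p²x = px) if and only if p is an order idempotent (p² = p and p ≤ e). The same equivalence holds for right band projections (for every x ≥ 0, xp ≤ x and xp² = xp). -/

import Mathlib

/-- In a Banach lattice algebra with identity `e`, a positive
element `p` is a left band projection iff it is an order idempotent, and likewise for
right band projections. -/
theorem left_right_band_projection_iff_order_idempotent
    {A : Type*} [NormedAddCommGroup A] [Lattice A] [HasSolidNorm A]
    [IsOrderedAddMonoid A] [NormedSpace ℝ A]
    [PosSMulStrictMono ℝ A] [CompleteSpace A]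
    (mul : A →ₗ[ℝ] A →ₗ[ℝ] A)
    (mul_assoc : ∀ a b c : A, mul (mul a b) c = mul a (mul b c))
    (norm_mul_le : ∀ a b : A, ‖mul a b‖ ≤ ‖a‖ * ‖b‖)
    (mul_nonneg : ∀ a b : A, 0 ≤ a → 0 ≤ b → 0 ≤ mul a b)
    (e : A) (one_mul : ∀ a : A, mul e a = a) (mul_one : ∀ a : A, mul a e = a)
    (norm_e : ‖e‖ = 1)
    (p : A) (hp : 0 ≤ p) :
    ((∀ x : A, 0 ≤ x → mul p x ≤ x ∧ mul (mul p p) x = mul p x) ↔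
      (mul p p = p ∧ p ≤ e)) ∧
    ((∀ x : A, 0 ≤ x → mul x p ≤ x ∧ mul x (mul p p) = mul x p) ↔
      (mul p p = p ∧ p ≤ e)) := by
  -- First, the identity is positive.
  have he : (0 : A) ≤ e := by
    set f : A := |e| with hf
    set g : A := f - e with hg
    have hg0 : 0 ≤ g := sub_nonneg.mpr (le_abs_self e)
    have hf0 : 0 ≤ f := abs_nonneg e
    have hfe : f = e + g := by simp [hg]
    have hnf : ‖f‖ = 1 := by rw [hf, norm_abs_eq_norm, norm_e]
    -- powers of f
    let P : ℕ → A := fun n => Nat.rec e (fun _ q => mul f q) n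
    have hP0 : P 0 = e := rfl
    have hPsucc : ∀ n, P (n + 1) = mul f (P n) := fun n => rfl
    have key : ∀ n : ℕ, ‖P n‖ ≤ 1 ∧ (n : ℝ) • g ≤ P n - e := by
      intro n
      induction n with
      | zero => simp [hP0, norm_e]
      | succ n ih =>
        obtain ⟨ihn, ihg⟩ := ih
        have hPe : 0 ≤ P n - e := le_trans (smul_nonneg (by positivity) hg0) ihg
        constructor
        · rw [hPsucc]
          calc ‖mul f (P n)‖ ≤ ‖f‖ * ‖P n‖ := norm_mul_le f (P n)
            _ ≤ 1 * 1 := by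
                apply mul_le_mul (le_of_eq hnf) ihn (norm_nonneg _) (by norm_num)
            _ = 1 := by norm_num
        · have h1 : mul g (P n - e) + g ≤ mul g (P n) := by
            have : mul g (P n) = mul g (P n - e) + g := by
              rw [map_sub (mul g), mul_one]; abel
            rw [this]
          have h2 : mul (e + g) (P n) = P n + mul g (P n) := by
            rw [map_add]
            simp [one_mul, LinearMap.add_apply]
          have h3 : 0 ≤ mul g (P n - e) := mul_nonneg _ _ hg0 hPe
          have h4 : g ≤ mul g (P n) := by
            calc g = 0 + g := by abel
              _ ≤ mul g (P n - e) + g := by exact add_le_add_left h3 g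
              _ ≤ mul g (P n) := h1
          rw [hPsucc, ← hfe] at *
          rw [hfe, h2]
          push_cast
          calc ((n : ℝ) + 1) • g = (n : ℝ) • g + g := by
                rw [add_smul, one_smul]
            _ ≤ (P n - e) + mul g (P n) := add_le_add ihg h4
            _ = P n + mul g (P n) - e := by abel
    -- deduce g = 0
    have hbound : ∀ n : ℕ, (n : ℝ) * ‖g‖ ≤ 2 := by
      intro n
      obtain ⟨hn1, hn2⟩ := key n
      have h5 : |(n : ℝ) • g| ≤ |P n - e| := by
        rw [abs_of_nonneg (smul_nonneg (by positivity) hg0)]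
        exact le_trans hn2 (le_abs_self _)
      have h6 : ‖(n : ℝ) • g‖ ≤ ‖P n - e‖ := HasSolidNorm.solid h5
      rw [norm_smul, Real.norm_natCast] at h6
      calc (n : ℝ) * ‖g‖ ≤ ‖P n - e‖ := h6
        _ ≤ ‖P n‖ + ‖e‖ := norm_sub_le _ _
        _ ≤ 1 + 1 := add_le_add hn1 (le_of_eq norm_e)
        _ = 2 := by norm_num
    have hgz : g = 0 := by
      by_contra hne
      have hpos : 0 < ‖g‖ := norm_pos_iff.mpr hne
      obtain ⟨n, hn⟩ := exists_nat_gt (2 / ‖g‖)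
      have := hbound n
      have : (n : ℝ) ≤ 2 / ‖g‖ := (le_div_iff₀ hpos).mpr this
      linarith
    have : e = f := by rw [hfe, hgz, add_zero]
    rw [this]; exact hf0
  constructor
  · constructor
    · intro h
      obtain ⟨h1, h2⟩ := h e he
      simp only [mul_one] at h1 h2
      exact ⟨h2, h1⟩
    · rintro ⟨hidem, hpe⟩ x hx
      refine ⟨?_, by rw [hidem]⟩
      have : 0 ≤ mul (e - p) x := mul_nonneg _ _ (sub_nonneg.mpr hpe) hx
      rw [map_sub, LinearMap.sub_apply, one_mul, sub_nonneg] at this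
      exact this
  · constructor
    · intro h
      obtain ⟨h1, h2⟩ := h e he
      simp only [one_mul] at h1 h2
      exact ⟨h2, h1⟩
    · rintro ⟨hidem, hpe⟩ x hx
      refine ⟨?_, by rw [hidem]⟩
      have : 0 ≤ mul x (e - p) := mul_nonneg _ _ hx (sub_nonneg.mpr hpe)
      rw [map_sub, mul_one, sub_nonneg] at this
      exact this
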